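/- Let biG = (𝒩, ℰ, ℰ′) be a bilevel graph on 𝒩 = {1,…,N} with N ≥ 2, with associated matrices Σ and P. Then for every j ∈ {1,…,N}, Σ_{i=1}^N (Σ + P)_{ij} = d_j⁺ − d_j⁻, where d_j⁺ and d_j⁻ are the in- and out-degree of node j in the state graph G. Consequently, the Euclidean norm of the row vector 1ᵀ(Σ + P) ∈ ℝ^N equals √N · U_G. -/

import Mathlib

open scoped InnerProductSpace Topology
open Filter

noncomputable section

/-- The simple (undirected) graph induced by a set of directed edges on `Fin N`. -/
def graphOf {N : ℕ} (E : Finset (Fin N × Fin N)) : SimpleGraph (Fin N) where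
  Adj i j := i ≠ j ∧ ((i, j) ∈ E ∨ (j, i) ∈ E)
  symm := ⟨fun i j h => ⟨h.1.symm, h.2.symm⟩⟩
  loopless := ⟨fun i h => h.1 rfl⟩

/-- Degree of node `i` in the undirected graph induced by `E`: number of adjacent nodes. -/
def degE {N : ℕ} (E : Finset (Fin N × Fin N)) (i : Fin N) : ℕ :=
  (Finset.univ.filter (fun j => j ≠ i ∧ ((i, j) ∈ E ∨ (j, i) ∈ E))).card

/-- The graph Laplacian of the graph induced by `E`. -/
def lapE {N : ℕ} (E : Finset (Fin N × Fin N)) : Matrix (Fin N) (Fin N) ℝ :=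
  fun i j =>
    if i = j then (degE E i : ℝ)
    else if (i, j) ∈ E ∨ (j, i) ∈ E then -1 else 0

/-- The skew-symmetric matrix `Σ` built from the Laplacian of the base graph. -/
def sigmaE {N : ℕ} (E' : Finset (Fin N × Fin N)) : Matrix (Fin N) (Fin N) ℝ :=
  fun i j => if i < j then -(lapE E' i j) else if j < i then lapE E' i j else 0

/-- The matrix `P^{ij}`. -/
def pijM (N : ℕ) (i j : Fin N) : Matrix (Fin N) (Fin N) ℝ :=
  fun h k =>
    if h = i ∧ k = i then 1
    else if h = j ∧ k = j then 1
    else if h = j ∧ k = i then -2 else 0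

/-- The matrix `P = ∑_{(i,j) ∈ ℰ∖ℰ′} P^{ij}`. -/
def pE {N : ℕ} (E E' : Finset (Fin N × Fin N)) : Matrix (Fin N) (Fin N) ℝ :=
  ∑ e ∈ E \ E', pijM N e.1 e.2

/-- The block operator `Q ⊗ I : H^M → H^N` induced by a matrix `Q ∈ ℝ^{N×M}`. -/
def matVecH {H : Type*} [NormedAddCommGroup H] [InnerProductSpace ℝ H] {N M : ℕ}
    (Q : Matrix (Fin N) (Fin M) ℝ) (x : Fin M → H) : Fin N → H :=
  fun h => ∑ k, Q h k • x k

/-- `(E, E')` forms a bilevel graph: the state graph `(𝒩, E)` is connected with a topological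
ordering, and the base graph `(𝒩, E')` is a connected subgraph. -/
structure IsBilevel {N : ℕ} (E E' : Finset (Fin N × Fin N)) : Prop where
  base_subset : E' ⊆ E
  topo : ∀ e ∈ E, e.1 < e.2
  state_conn : (graphOf E).Connected
  base_conn : (graphOf E').Connected

/-- `Z` gives an onto decomposition of the Laplacian of the base graph `E'`:
`L = Z Zᵀ` and `ker Zᵀ = span{(1,…,1)}`. -/
def ZOnto {N : ℕ} (E' : Finset (Fin N × Fin N)) (Z : Matrix (Fin N) (Fin (N - 1)) ℝ) : Prop :=
  Z * Z.transpose = lapE E' ∧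
  ∀ v : Fin N → ℝ, Z.transpose.mulVec v = 0 ↔ ∃ c : ℝ, v = fun _ => c

/-- The graph-based Douglas–Rachford iteration: `a_i^{k+1} ∈ A_i x_i^{k+1}`,
`(L⊗I)x^{k+1} + ((Σ+P)⊗I)x^{k+1} + σ a^{k+1} = (Z⊗I)w^k` and
`w^{k+1} = w^k − θ_k (Zᵀ⊗I)x^{k+1}`. -/
structure IsGDR {H : Type*} [NormedAddCommGroup H] [InnerProductSpace ℝ H] {N : ℕ}
    (E E' : Finset (Fin N × Fin N)) (Z : Matrix (Fin N) (Fin (N - 1)) ℝ)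
    (A : Fin N → H → Set H) (σ : ℝ) (θ : ℕ → ℝ)
    (x : ℕ → Fin N → H) (a : ℕ → Fin N → H) (w : ℕ → Fin (N - 1) → H) : Prop where
  mem : ∀ k i, a (k + 1) i ∈ A i (x (k + 1) i)
  res : ∀ k, matVecH (lapE E' + sigmaE E' + pE E E') (x (k + 1)) + σ • a (k + 1)
          = matVecH Z (w k)
  upd : ∀ k, w (k + 1) = w k - θ k • matVecH Z.transpose (x (k + 1))

/-- A set-valued operator on a real inner product space is monotone. -/
def IsMonotoneOp {K : Type*} [NormedAddCommGroup K] [InnerProductSpace ℝ K]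
    (A : K → Set K) : Prop :=
  ∀ x y u v : K, u ∈ A x → v ∈ A y → 0 ≤ ⟪u - v, x - y⟫_ℝ

/-- A set-valued operator is maximal monotone. -/
def IsMaxMonotone {K : Type*} [NormedAddCommGroup K] [InnerProductSpace ℝ K]
    (A : K → Set K) : Prop :=
  IsMonotoneOp A ∧ ∀ x u : K, (∀ y v : K, v ∈ A y → 0 ≤ ⟪u - v, x - y⟫_ℝ) → u ∈ A x

/-- `zer (A_1 + ⋯ + A_N) ≠ ∅`. -/
def SumZerNonempty {H : Type*} [NormedAddCommGroup H] [InnerProductSpace ℝ H] {N : ℕ}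
    (A : Fin N → H → Set H) : Prop :=
  ∃ (xs : H) (b : Fin N → H), (∀ i, b i ∈ A i xs) ∧ ∑ i, b i = 0

/-- Weak convergence of a sequence in an inner product space. -/
def WeakLim {K : Type*} [NormedAddCommGroup K] [InnerProductSpace ℝ K]
    (u : ℕ → K) (l : K) : Prop :=
  ∀ h : K, Tendsto (fun k => ⟪u k, h⟫_ℝ) atTop (𝓝 ⟪l, h⟫_ℝ)

/-- The state variance `Var(x) = (1/N) ∑_i ‖x_i − x̄‖²`. -/
def stateVar {H : Type*} [NormedAddCommGroup H] [InnerProductSpace ℝ H] {N : ℕ}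
    (x : Fin N → H) : ℝ :=
  (N : ℝ)⁻¹ * ∑ i, ‖x i - (N : ℝ)⁻¹ • ∑ j, x j‖ ^ 2

/-- In-degree `d_i⁺ = #{h : (h,i) ∈ E}` of node `i`. -/
def inDeg {N : ℕ} (E : Finset (Fin N × Fin N)) (i : Fin N) : ℕ :=
  (Finset.univ.filter (fun h => (h, i) ∈ E)).card

/-- Out-degree `d_i⁻ = #{h : (i,h) ∈ E}` of node `i`. -/
def outDeg {N : ℕ} (E : Finset (Fin N × Fin N)) (i : Fin N) : ℕ :=
  (Finset.univ.filter (fun h => (i, h) ∈ E)).card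

/-- The unbalance `U_G = sqrt((1/N) ∑_i (d_i⁻ − d_i⁺)²)` of the state graph. -/
def unbalance {N : ℕ} (E : Finset (Fin N × Fin N)) : ℝ :=
  Real.sqrt ((N : ℝ)⁻¹ * ∑ i, ((outDeg E i : ℝ) - (inDeg E i : ℝ)) ^ 2)

end

/-- For a bilevel graph, `∑_i (Σ + P)_{ij} = d_j⁺ − d_j⁻` for every node `j`,
and consequently the Euclidean norm of the row vector `1ᵀ(Σ + P)` equals `√N · U_G`. -/
lemma sigma_pt {N : ℕ} (E' : Finset (Fin N × Fin N)) (htopo : ∀ e ∈ E', e.1 < e.2)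
    (i j : Fin N) :
    sigmaE E' i j = (if (i, j) ∈ E' then (1:ℝ) else 0) - (if (j, i) ∈ E' then 1 else 0) := by
  have hij : (i, j) ∈ E' → i < j := fun h => htopo _ h
  have hji : (j, i) ∈ E' → j < i := fun h => htopo _ h
  unfold sigmaE lapE
  rcases lt_trichotomy i j with h | h | h
  · have h2 : (j, i) ∉ E' := fun hm => absurd (hji hm) (not_lt.2 h.le)
    by_cases hm : (i, j) ∈ E' <;> simp [h, h.ne, h2, hm, not_lt.2 h.le]
  · subst h
    have h1 : (i, i) ∉ E' := fun hm => absurd (hij hm) (lt_irrefl i)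
    simp [h1]
  · have h2 : (i, j) ∉ E' := fun hm => absurd (hij hm) (not_lt.2 h.le)
    by_cases hm : (j, i) ∈ E' <;> simp [h, h.ne', h2, hm, not_lt.2 h.le]

lemma pij_col {N : ℕ} (a b j : Fin N) (hab : a ≠ b) :
    ∑ i, pijM N a b i j = (if j = b then (1:ℝ) else 0) - (if j = a then 1 else 0) := by
  by_cases hja : j = a
  · have hjb : j ≠ b := hja ▸ hab
    have key : ∀ i, pijM N a b i j = (if i = a then (1:ℝ) else 0) + (if i = b then -2 else 0) := by
      intro i
      unfold pijM
      by_cases h : i = a <;> by_cases h' : i = b <;> simp_all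
    rw [Finset.sum_congr rfl (fun i _ => key i), Finset.sum_add_distrib]
    simp [Finset.sum_ite_eq' Finset.univ, hjb, hja, hab]
    norm_num
  · by_cases hjb : j = b
    · have key : ∀ i, pijM N a b i j = (if i = b then (1:ℝ) else 0) := by
        intro i
        unfold pijM
        by_cases h : i = a <;> by_cases h' : i = b <;> simp_all [Ne.symm hab]
      rw [Finset.sum_congr rfl (fun i _ => key i)]
      simp [Finset.sum_ite_eq' Finset.univ, hja, hjb, Ne.symm hab]
    · have key : ∀ i, pijM N a b i j = 0 := by
        intro i
        unfold pijM
        simp [hja, hjb]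
      rw [Finset.sum_congr rfl (fun i _ => key i)]
      simp [hja, hjb]

lemma inDeg_eq {N : ℕ} (S : Finset (Fin N × Fin N)) (j : Fin N) :
    (inDeg S j : ℝ) = ∑ e ∈ S, (if j = e.2 then (1:ℝ) else 0) := by
  rw [Finset.sum_boole]
  norm_num
  apply Finset.card_nbij' (fun h => (h, j)) (fun e => e.1)
  · intro a ha; simp at ha ⊢; exact ha
  · intro e he; simp at he ⊢; rw [he.2]; exact he.1
  · intro a ha; rfl
  · intro e he; simp at he; ext <;> simp [← he.2]

lemma outDeg_eq {N : ℕ} (S : Finset (Fin N × Fin N)) (j : Fin N) :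
    (outDeg S j : ℝ) = ∑ e ∈ S, (if j = e.1 then (1:ℝ) else 0) := by
  rw [Finset.sum_boole]
  norm_num
  apply Finset.card_nbij' (fun h => (j, h)) (fun e => e.2)
  · intro a ha; simp at ha ⊢; exact ha
  · intro e he; simp at he ⊢; rw [he.2]; exact he.1
  · intro a ha; rfl
  · intro e he; simp at he; ext <;> simp [← he.2]

theorem column_sums_and_unbalance
    (N : ℕ) (hN : 2 ≤ N) (E E' : Finset (Fin N × Fin N)) (hbi : IsBilevel E E') :
    (∀ j : Fin N,
      ∑ i, (sigmaE E' + pE E E') i j = (inDeg E j : ℝ) - (outDeg E j : ℝ)) ∧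
    Real.sqrt (∑ j, (∑ i, (sigmaE E' + pE E E') i j) ^ 2)
      = Real.sqrt N * unbalance E := by
  have htopo' : ∀ e ∈ E', e.1 < e.2 := fun e he => hbi.topo e (hbi.base_subset he)
  have part1 : ∀ j : Fin N,
      ∑ i, (sigmaE E' + pE E E') i j = (inDeg E j : ℝ) - (outDeg E j : ℝ) := by
    intro j
    have hsig : ∑ i, sigmaE E' i j = (inDeg E' j : ℝ) - (outDeg E' j : ℝ) := by
      rw [Finset.sum_congr rfl (fun i _ => sigma_pt E' htopo' i j), Finset.sum_sub_distrib,
        Finset.sum_boole, Finset.sum_boole]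
      simp [inDeg, outDeg]
    have hcol : ∀ e ∈ E \ E', ∑ i, pijM N e.1 e.2 i j
        = (if j = e.2 then (1:ℝ) else 0) - (if j = e.1 then 1 else 0) := by
      intro e he
      exact pij_col e.1 e.2 j (hbi.topo e (Finset.mem_sdiff.1 he).1).ne
    have hp : ∑ i, pE E E' i j
        = ((inDeg E j : ℝ) - (outDeg E j : ℝ)) - ((inDeg E' j : ℝ) - (outDeg E' j : ℝ)) := by
      unfold pE
      simp only [Matrix.sum_apply]
      rw [Finset.sum_comm, Finset.sum_congr rfl hcol, Finset.sum_sub_distrib,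
        Finset.sum_sdiff_eq_sub hbi.base_subset, Finset.sum_sdiff_eq_sub hbi.base_subset,
        ← inDeg_eq, ← inDeg_eq, ← outDeg_eq, ← outDeg_eq]
      ring
    simp only [Matrix.add_apply, Finset.sum_add_distrib, hsig, hp]
    ring
  refine ⟨part1, ?_⟩
  have hsq : ∀ j : Fin N, (∑ i, (sigmaE E' + pE E E') i j) ^ 2
      = ((outDeg E j : ℝ) - (inDeg E j : ℝ)) ^ 2 := by
    intro j; rw [part1 j]; ring
  rw [Finset.sum_congr rfl (fun j _ => hsq j)]
  unfold unbalance
  rw [← Real.sqrt_mul (by positivity : (0:ℝ) ≤ (N:ℝ))]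
  congr 1
  have hN0 : (N : ℝ) ≠ 0 := by positivity
  field_simp
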